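/- (Momentum point of accelerated proximal gradient stays near the subproblem optimum.) Let H be a real Hilbert space and Q : H → ℝ ∪ {+∞} an m-strongly convex, proper, lower semicontinuous function with m > 0, Q(0) = 0, unique minimizer p*, and optimal value Q* = Q(p*) ≤ 0. Suppose a, b ∈ H satisfy Q(a) − Q* ≤ η (−Q*) and Q(b) − Q* ≤ η (−Q*) for some η ≥ 0, and let y = a + κ (a − b) for some κ ∈ [0, 1]. Then ‖y − p*‖ ≤ 3 √(2η/m) √(−Q*). -/

import Mathlib

open Metric Filter

/-- `m`-strong convexity for an extended-real-valued function. -/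
def StronglyConvexEReal {H : Type*} [NormedAddCommGroup H] [InnerProductSpace ℝ H]
    (m : ℝ) (Q : H → EReal) : Prop :=
  ∀ x y : H, ∀ a b : ℝ, 0 ≤ a → 0 ≤ b → a + b = 1 →
    Q (a • x + b • y) ≤
      (a : EReal) * Q x + (b : EReal) * Q y - ((m / 2 * a * b * ‖x - y‖ ^ 2 : ℝ) : EReal)

/-- the momentum point of accelerated proximal gradient stays near the
subproblem optimum: if `Q(a) − Q* ≤ η(−Q*)` and `Q(b) − Q* ≤ η(−Q*)`, then the
extrapolated point `y = a + κ(a − b)` with `κ ∈ [0,1]` satisfies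
`‖y − p*‖ ≤ 3 √(2η/m) √(−Q*)`. -/
theorem statement16
    {H : Type*} [NormedAddCommGroup H] [InnerProductSpace ℝ H] [CompleteSpace H]
    (Q : H → EReal) (m η κ Qstar : ℝ) (pstar a b : H)
    (hm : 0 < m)
    (hQ_sc : StronglyConvexEReal m Q)
    -- Q : H → ℝ ∪ {+∞} proper (never −∞, finite somewhere)
    (hQ_nebot : ∀ z : H, Q z ≠ ⊥)
    (hQ_proper : ∃ z : H, Q z ≠ ⊤)
    (hQ_lsc : LowerSemicontinuous Q)
    -- Q(0) = 0
    (hQ0 : Q 0 = 0)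
    -- p* is the (unique) minimizer of Q, with optimal value Q* = Q(p*) ≤ 0
    (hpstar : ∀ z : H, Q pstar ≤ Q z)
    (hQstar : Q pstar = (Qstar : EReal))
    (hQstar_le : Qstar ≤ 0)
    -- multiplicative inexactness at a and b, with η ≥ 0
    (hη : 0 ≤ η)
    (ha : Q a - Q pstar ≤ (η : EReal) * -(Q pstar))
    (hb : Q b - Q pstar ≤ (η : EReal) * -(Q pstar))
    -- extrapolation coefficient κ ∈ [0,1]
    (hκ0 : 0 ≤ κ) (hκ1 : κ ≤ 1) :
    ‖a + κ • (a - b) - pstar‖ ≤ 3 * Real.sqrt (2 * η / m) * Real.sqrt (-Qstar) := by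
  set r : ℝ := Real.sqrt (2 * η / m) * Real.sqrt (-Qstar) with hr
  have hrnn : 0 ≤ r := mul_nonneg (Real.sqrt_nonneg _) (Real.sqrt_nonneg _)
  have bound : ∀ z : H, Q z - Q pstar ≤ (η : EReal) * -(Q pstar) → ‖z - pstar‖ ≤ r := by
    intro z hz
    rw [hQstar] at hz
    have hne : -(((Qstar : ℝ)) : EReal) = ((-Qstar : ℝ) : EReal) := by norm_cast
    rw [hne, ← EReal.coe_mul] at hz
    have hzt : Q z ≠ ⊤ := by
      intro h
      rw [h, EReal.top_sub_coe] at hz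
      exact absurd hz (not_le.mpr (EReal.coe_lt_top _))
    set qz : ℝ := (Q z).toReal with hqz
    have hQz : Q z = (qz : EReal) := (EReal.coe_toReal hzt (hQ_nebot z)).symm
    rw [hQz, ← EReal.coe_sub, EReal.coe_le_coe_iff] at hz
    set d : ℝ := ‖z - pstar‖ with hd
    have key : ∀ l : ℝ, 0 < l → l < 1 → m / 2 * (1 - l) * d ^ 2 ≤ qz - Qstar := by
      intro l hl0 hl1
      have hsc := hQ_sc z pstar l (1 - l) (le_of_lt hl0) (by linarith) (by ring)
      have hmin := hpstar (l • z + (1 - l) • pstar)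
      rw [hQz, hQstar] at hsc
      rw [hQstar] at hmin
      have hh := le_trans hmin hsc
      rw [← EReal.coe_mul, ← EReal.coe_mul, ← EReal.coe_add, ← EReal.coe_sub,
        EReal.coe_le_coe_iff] at hh
      have h2 : l * (m / 2 * (1 - l) * d ^ 2) ≤ l * (qz - Qstar) := by nlinarith
      have h3 := (mul_le_mul_iff_right₀ hl0).mp h2
      linarith
    have key2 : m / 2 * d ^ 2 ≤ qz - Qstar := by
      have htend : Filter.Tendsto (fun l : ℝ => m / 2 * (1 - l) * d ^ 2)
          (nhdsWithin 0 (Set.Ioo 0 1)) (nhds (m / 2 * (1 - 0) * d ^ 2)) := by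
        apply Filter.Tendsto.mono_left _ nhdsWithin_le_nhds
        exact Continuous.tendsto (by fun_prop) 0
      have hne' : (nhdsWithin (0:ℝ) (Set.Ioo 0 1)).NeBot := by
        apply IsGLB.nhdsWithin_neBot
        · exact isGLB_Ioo one_pos
        · exact Set.nonempty_Ioo.mpr one_pos
      have := le_of_tendsto htend (eventually_nhdsWithin_of_forall (fun l hl => key l hl.1 hl.2))
      simpa using this
    have hd2 : d ^ 2 ≤ 2 * η * (-Qstar) / m := by
      rw [le_div_iff₀ hm]
      nlinarith
    have hdnn : 0 ≤ d := norm_nonneg _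
    calc d ≤ Real.sqrt (2 * η * (-Qstar) / m) := by
            rw [← Real.sqrt_sq hdnn]; exact Real.sqrt_le_sqrt hd2
      _ = r := by
        rw [hr, ← Real.sqrt_mul (by positivity)]
        ring_nf
  have hba := bound a ha
  have hbb := bound b hb
  have hdecomp : a + κ • (a - b) - pstar = (1 + κ) • (a - pstar) - κ • (b - pstar) := by
    module
  rw [hdecomp]
  calc ‖(1 + κ) • (a - pstar) - κ • (b - pstar)‖
      ≤ ‖(1 + κ) • (a - pstar)‖ + ‖κ • (b - pstar)‖ := norm_sub_le _ _
    _ = (1 + κ) * ‖a - pstar‖ + κ * ‖b - pstar‖ := by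
        rw [norm_smul, norm_smul, Real.norm_eq_abs, Real.norm_eq_abs,
          abs_of_nonneg (by linarith), abs_of_nonneg hκ0]
    _ ≤ (1 + κ) * r + κ * r := by
        gcongr <;> linarith
    _ ≤ 3 * r := by nlinarith
    _ = 3 * Real.sqrt (2 * η / m) * Real.sqrt (-Qstar) := by rw [hr, mul_assoc]
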